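/- Let A_τ ∈ ℝⁿˣⁿ, B_τ ∈ ℝⁿˣᵐ, τ ≥ 0, and let χ̄₁,…,χ̄ₙ ∈ [0,1), ω̄ ≥ 0, η, d̄, ε̄ ∈ ℝⁿ nonnegative. Define Π_A = conv({χ_v A_τ : χ_v ∈ V}) and Π_B = conv({(χ_v − ω_v(I+χ_v))B_τ : χ_v ∈ V, ω_v ∈ {0,ω̄}}), where V = {diag(s₁χ̄₁,…,sₙχ̄ₙ) : s ∈ {−1,1}ⁿ}. Suppose x⁺ = A_τ x + τ·Δ(x) + (1−ω)·B_τ u + d with ω ∈ [0,ω̄], |dᵢ| ≤ d̄ᵢ, |Δᵢ(x)| ≤ ηᵢ‖x‖; and suppose y = (I+χ)x + ε and y⁺ = (I+χ⁺)x⁺ + ε⁺, where χ, χ⁺ are diagonal with |χᵢ|,|χ⁺ᵢ| ≤ χ̄ᵢ and |εᵢ|,|ε⁺ᵢ| ≤ ε̄ᵢ. Then there exist matrices Δ̂_A ∈ Π_A and Δ̂_B ∈ Π_B and a vector d̂ ∈ ℝⁿ with |d̂ᵢ| ≤ δ̂ᵢ for all i, where δ̂ᵢ = (1+χ̄ᵢ)·τ·ηᵢ·(maxⱼ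 1/(1−χ̄ⱼ))·(‖y‖+‖ε̄‖) + (1+χ̄ᵢ)·d̄ᵢ + ε̄ᵢ, such that y⁺ = (A_τ + Δ̂_A)·x + (B_τ + Δ̂_B)·u + d̂. -/

import Mathlib

/-- The Euclidean (ℓ²) norm of a vector in `Fin n → ℝ`. -/
noncomputable def euclNorm {n : ℕ} (x : Fin n → ℝ) : ℝ :=
  ‖(WithLp.equiv 2 (Fin n → ℝ)).symm x‖

lemma euclNorm_nonneg {n : ℕ} (a : Fin n → ℝ) : 0 ≤ euclNorm a := norm_nonneg _

lemma euclNorm_mono {n : ℕ} {a b : Fin n → ℝ} (h : ∀ i, |a i| ≤ |b i|) :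
    euclNorm a ≤ euclNorm b := by
  unfold euclNorm
  rw [EuclideanSpace.norm_eq, EuclideanSpace.norm_eq]
  apply Real.sqrt_le_sqrt
  refine Finset.sum_le_sum fun i _ => ?_
  simp only [WithLp.equiv_symm_apply, PiLp.toLp_apply, Real.norm_eq_abs]
  exact pow_le_pow_left₀ (abs_nonneg _) (h i) 2

lemma euclNorm_smul {n : ℕ} (c : ℝ) (a : Fin n → ℝ) :
    euclNorm (c • a) = |c| * euclNorm a := by
  unfold euclNorm
  rw [WithLp.equiv_symm_apply, WithLp.toLp_smul, norm_smul, Real.norm_eq_abs]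

lemma euclNorm_sub_le {n : ℕ} (a b : Fin n → ℝ) :
    euclNorm (a - b) ≤ euclNorm a + euclNorm b := by
  unfold euclNorm
  rw [WithLp.equiv_symm_apply, WithLp.toLp_sub]
  exact norm_sub_le _ _

lemma diag_mem_hull {n : ℕ} (χbar χp : Fin n → ℝ)
    (hχbar : ∀ i, 0 ≤ χbar i) (hχp : ∀ i, |χp i| ≤ χbar i) :
    Matrix.diagonal χp ∈ convexHull ℝ
      {M : Matrix (Fin n) (Fin n) ℝ | ∃ s : Fin n → ℝ, (∀ i, s i = 1 ∨ s i = -1) ∧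
        M = Matrix.diagonal (fun i => s i * χbar i)} := by
  have hbox : χp ∈ convexHull ℝ
      (Set.univ.pi fun i => ({-(χbar i), χbar i} : Set ℝ)) := by
    apply mem_convexHull_pi
    intro i _
    rw [convexHull_pair, segment_eq_Icc (by linarith [hχbar i] : -(χbar i) ≤ χbar i)]
    exact ⟨(abs_le.mp (hχp i)).1, (abs_le.mp (hχp i)).2⟩
  have hlin : IsLinearMap ℝ (Matrix.diagonal : (Fin n → ℝ) → Matrix (Fin n) (Fin n) ℝ) := by
    constructor
    · intro a b; rw [Matrix.diagonal_add]; rfl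
    · intro c a; rw [Matrix.diagonal_smul]
  have himg := Set.mem_image_of_mem Matrix.diagonal hbox
  rw [hlin.image_convexHull] at himg
  refine convexHull_mono ?_ himg
  rintro _ ⟨v, hv, rfl⟩
  rw [Set.mem_univ_pi] at hv
  have hveq : v = fun i => (if v i = χbar i then 1 else -1) * χbar i := by
    funext i
    by_cases h' : v i = χbar i
    · simp [h']
    · have h : v i = -(χbar i) := by
        rcases hv i with h | h
        · exact h
        · exact absurd (Set.mem_singleton_iff.mp h) h'
      have hne : -(χbar i) ≠ χbar i := fun he => h' (h.trans he)
      rw [h, if_neg hne, neg_one_mul]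
  exact ⟨fun i => if v i = χbar i then 1 else -1,
    fun i => by by_cases h : v i = χbar i <;> simp [h], by rw [← hveq]⟩

/-- **Equivalent uncertain linear model (main modeling result of the paper).**
The attacked, noisy, discretized dynamics are exactly overapproximated by
`y⁺ = (A_τ + Δ̂_A) x + (B_τ + Δ̂_B) u + d̂` with `Δ̂_A ∈ Π_A`, `Δ̂_B ∈ Π_B` and
`|d̂ᵢ| ≤ δ̂ᵢ := (1+χ̄ᵢ) τ ηᵢ (maxⱼ (1-χ̄ⱼ)⁻¹)(‖y‖+‖ε̄‖) + (1+χ̄ᵢ) d̄ᵢ + ε̄ᵢ`. -/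
theorem stmt_8 (n m : ℕ)
    (Aτ : Matrix (Fin n) (Fin n) ℝ) (Bτ : Matrix (Fin n) (Fin m) ℝ)
    (τ : ℝ) (hτ : 0 ≤ τ)
    (χbar : Fin n → ℝ) (hχbar : ∀ i, 0 ≤ χbar i ∧ χbar i < 1)
    (ωbar : ℝ) (hωbar : 0 ≤ ωbar)
    (η dbar εbar : Fin n → ℝ)
    (hη : ∀ i, 0 ≤ η i) (hdbar : ∀ i, 0 ≤ dbar i) (hεbar : ∀ i, 0 ≤ εbar i)
    (V : Set (Matrix (Fin n) (Fin n) ℝ))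
    (hV : V = {M | ∃ s : Fin n → ℝ, (∀ i, s i = 1 ∨ s i = -1) ∧
        M = Matrix.diagonal (fun i => s i * χbar i)})
    (PiA : Set (Matrix (Fin n) (Fin n) ℝ))
    (hPiA : PiA = convexHull ℝ ((fun χv => χv * Aτ) '' V))
    (PiB : Set (Matrix (Fin n) (Fin m) ℝ))
    (hPiB : PiB = convexHull ℝ {N : Matrix (Fin n) (Fin m) ℝ |
        ∃ χv ∈ V, ∃ ωv ∈ ({0, ωbar} : Set ℝ), N = (χv - ωv • (1 + χv)) * Bτ})
    (x : Fin n → ℝ) (u : Fin m → ℝ)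
    (ω : ℝ) (hω : ω ∈ Set.Icc (0 : ℝ) ωbar)
    (d : Fin n → ℝ) (hd : ∀ i, |d i| ≤ dbar i)
    (Δ : (Fin n → ℝ) → (Fin n → ℝ)) (hΔ : ∀ i, |Δ x i| ≤ η i * euclNorm x)
    (χ χp : Fin n → ℝ)
    (hχ : ∀ i, |χ i| ≤ χbar i) (hχp : ∀ i, |χp i| ≤ χbar i)
    (ε εp : Fin n → ℝ)
    (hε : ∀ i, |ε i| ≤ εbar i) (hεp : ∀ i, |εp i| ≤ εbar i)
    (xp y yp : Fin n → ℝ)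
    (hxp : xp = Aτ.mulVec x + τ • Δ x + (1 - ω) • Bτ.mulVec u + d)
    (hy : y = (1 + Matrix.diagonal χ).mulVec x + ε)
    (hyp : yp = (1 + Matrix.diagonal χp).mulVec xp + εp) :
    ∃ ΔA ∈ PiA, ∃ ΔB ∈ PiB, ∃ dh : Fin n → ℝ,
      (∀ i, |dh i| ≤ (1 + χbar i) * τ * η i * (⨆ j, (1 - χbar j)⁻¹)
          * (euclNorm y + euclNorm εbar) + (1 + χbar i) * dbar i + εbar i) ∧
      yp = (Aτ + ΔA).mulVec x + (Bτ + ΔB).mulVec u + dh := by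
  obtain ⟨hω0, hω1⟩ := hω
  obtain ⟨t, ht0, ht1, htω⟩ : ∃ t : ℝ, 0 ≤ t ∧ t ≤ 1 ∧ t * ωbar = ω := by
    by_cases h : ωbar = 0
    · exact ⟨0, le_refl 0, zero_le_one, by rw [h, mul_zero]; linarith⟩
    · exact ⟨ω / ωbar, div_nonneg hω0 hωbar, div_le_one_of_le₀ hω1 hωbar,
        div_mul_cancel₀ ω h⟩
  have hdmem : Matrix.diagonal χp ∈ convexHull ℝ V := by
    rw [hV]; exact diag_mem_hull χbar χp (fun i => (hχbar i).1) hχp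
  refine ⟨Matrix.diagonal χp * Aτ, ?_,
    (Matrix.diagonal χp - ω • (1 + Matrix.diagonal χp)) * Bτ, ?_,
    (1 + Matrix.diagonal χp).mulVec (τ • Δ x + d) + εp, ?_, ?_⟩
  · -- ΔA ∈ PiA
    rw [hPiA]
    have hlin : IsLinearMap ℝ (fun M : Matrix (Fin n) (Fin n) ℝ => M * Aτ) :=
      ⟨fun a b => add_mul a b Aτ, fun c a => smul_mul_assoc c a Aτ⟩
    have := Set.mem_image_of_mem (fun M : Matrix (Fin n) (Fin n) ℝ => M * Aτ) hdmem
    rw [hlin.image_convexHull] at this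
    exact this
  · -- ΔB ∈ PiB
    rw [hPiB]
    set SB : Set (Matrix (Fin n) (Fin m) ℝ) := {N : Matrix (Fin n) (Fin m) ℝ |
        ∃ χv ∈ V, ∃ ωv ∈ ({0, ωbar} : Set ℝ), N = (χv - ωv • (1 + χv)) * Bτ} with hSB
    have hlinB : IsLinearMap ℝ (fun M : Matrix (Fin n) (Fin n) ℝ => M * Bτ) :=
      ⟨fun a b => Matrix.add_mul a b Bτ, fun c a => Matrix.smul_mul c a Bτ⟩
    have hq : Matrix.diagonal χp * Bτ ∈
        convexHull ℝ ((fun M : Matrix (Fin n) (Fin n) ℝ => M * Bτ) '' V) := by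
      have := Set.mem_image_of_mem (fun M : Matrix (Fin n) (Fin n) ℝ => M * Bτ) hdmem
      rwa [hlinB.image_convexHull] at this
    have hp0 : Matrix.diagonal χp * Bτ ∈ convexHull ℝ SB := by
      refine convexHull_mono ?_ hq
      rintro _ ⟨χv, hχv, rfl⟩
      exact ⟨χv, hχv, 0, Or.inl rfl, by rw [zero_smul, sub_zero]⟩
    let g : Matrix (Fin n) (Fin m) ℝ →ᵃ[ℝ] Matrix (Fin n) (Fin m) ℝ :=
      { toFun := fun N => (1 - ωbar) • N - ωbar • Bτ
        linear := (1 - ωbar) • LinearMap.id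
        map_vadd' := by
          intro p v
          simp only [vadd_eq_add, LinearMap.smul_apply, LinearMap.id_apply, smul_add]
          abel }
    have key : ∀ χv : Matrix (Fin n) (Fin n) ℝ,
        g (χv * Bτ) = (χv - ωbar • (1 + χv)) * Bτ := by
      intro χv
      show (1 - ωbar) • (χv * Bτ) - ωbar • Bτ = _
      simp only [Matrix.sub_mul, Matrix.add_mul, Matrix.one_mul, Matrix.smul_mul]
      module
    have hp1 : (Matrix.diagonal χp - ωbar • (1 + Matrix.diagonal χp)) * Bτ
        ∈ convexHull ℝ SB := by
      have himg := Set.mem_image_of_mem g hq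
      rw [g.image_convexHull] at himg
      rw [← key (Matrix.diagonal χp)]
      refine convexHull_mono ?_ himg
      rintro _ ⟨_, ⟨χv, hχv, rfl⟩, rfl⟩
      exact ⟨χv, hχv, ωbar, Or.inr rfl, key χv⟩
    have halg : (Matrix.diagonal χp - ω • (1 + Matrix.diagonal χp)) * Bτ
        = (1 - t) • (Matrix.diagonal χp * Bτ)
          + t • ((Matrix.diagonal χp - ωbar • (1 + Matrix.diagonal χp)) * Bτ) := by
      rw [← htω]
      simp only [Matrix.sub_mul, Matrix.add_mul, Matrix.one_mul, Matrix.smul_mul]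
      module
    rw [halg]
    exact (convex_convexHull ℝ SB) hp0 hp1 (by linarith) ht0 (by ring)
  · -- bound on dh
    intro i
    set M : ℝ := ⨆ j, (1 - χbar j)⁻¹ with hM
    have hMle : ∀ j, (1 - χbar j)⁻¹ ≤ M := by
      intro j
      rw [hM]
      exact le_ciSup (f := fun j => (1 - χbar j)⁻¹) ((Set.finite_range _).bddAbove) j
    have hMpos : 0 < M :=
      lt_of_lt_of_le (inv_pos.mpr (by linarith [(hχbar i).2])) (hMle i)
    have hxbound : ∀ j, |x j| ≤ M * |y j - ε j| := by
      intro j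
      have h4 : 0 < 1 - χbar j := by linarith [(hχbar j).2]
      have hyj : y j - ε j = (1 + χ j) * x j := by
        rw [hy]
        simp only [Pi.add_apply, Matrix.add_mulVec, Matrix.one_mulVec]
        rw [show ((Matrix.diagonal χ).mulVec x) j = χ j * x j from
          Matrix.mulVec_diagonal χ x j]
        ring
      have h1 : (1 - χbar j) ≤ |1 + χ j| := by
        have := (abs_le.mp (hχ j)).1
        have := le_abs_self (1 + χ j)
        linarith
      have h5 : (1 - χbar j) * |x j| ≤ |y j - ε j| := by
        rw [hyj, abs_mul]
        exact mul_le_mul_of_nonneg_right h1 (abs_nonneg _)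
      calc |x j| = (1 - χbar j)⁻¹ * ((1 - χbar j) * |x j|) := by
            field_simp
        _ ≤ (1 - χbar j)⁻¹ * |y j - ε j| :=
            mul_le_mul_of_nonneg_left h5 (inv_nonneg.mpr h4.le)
        _ ≤ M * |y j - ε j| := mul_le_mul_of_nonneg_right (hMle j) (abs_nonneg _)
    have hnx : euclNorm x ≤ M * (euclNorm y + euclNorm εbar) := by
      have e1 : euclNorm x ≤ euclNorm (M • (y - ε)) := by
        refine euclNorm_mono fun j => ?_
        rw [Pi.smul_apply, Pi.sub_apply, smul_eq_mul, abs_mul, abs_of_nonneg hMpos.le]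
        exact hxbound j
      have e2 : euclNorm (M • (y - ε)) = M * euclNorm (y - ε) := by
        rw [euclNorm_smul, abs_of_nonneg hMpos.le]
      have e3 : euclNorm (y - ε) ≤ euclNorm y + euclNorm ε := euclNorm_sub_le y ε
      have e4 : euclNorm ε ≤ euclNorm εbar := by
        refine euclNorm_mono fun j => ?_
        exact (hε j).trans (le_abs_self _)
      have e5 : euclNorm (y - ε) ≤ euclNorm y + euclNorm εbar := by linarith
      have := mul_le_mul_of_nonneg_left e5 hMpos.le
      calc euclNorm x ≤ M * euclNorm (y - ε) := by rw [← e2]; exact e1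
        _ ≤ M * (euclNorm y + euclNorm εbar) := this
    have hdhi : ((1 + Matrix.diagonal χp).mulVec (τ • Δ x + d) + εp) i
        = (1 + χp i) * (τ * Δ x i + d i) + εp i := by
      simp only [Pi.add_apply, Matrix.add_mulVec, Matrix.one_mulVec, Pi.smul_apply,
        smul_eq_mul]
      rw [show ((Matrix.diagonal χp).mulVec (τ • Δ x + d)) i
          = χp i * ((τ • Δ x + d) i) from Matrix.mulVec_diagonal χp _ i]
      simp only [Pi.add_apply, Pi.smul_apply, smul_eq_mul]
      ring
    rw [hdhi]
    have b1 : |1 + χp i| ≤ 1 + χbar i := by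
      have := abs_le.mp (hχp i)
      rw [abs_le]
      constructor <;> linarith [(hχbar i).1]
    have b2 : |τ * Δ x i + d i| ≤ τ * (η i * euclNorm x) + dbar i := by
      calc |τ * Δ x i + d i| ≤ |τ * Δ x i| + |d i| := abs_add_le _ _
        _ ≤ τ * (η i * euclNorm x) + dbar i := by
            rw [abs_mul, abs_of_nonneg hτ]
            exact add_le_add (mul_le_mul_of_nonneg_left (hΔ i) hτ) (hd i)
    have hb2n : (0 : ℝ) ≤ τ * (η i * euclNorm x) + dbar i :=
      add_nonneg (mul_nonneg hτ (mul_nonneg (hη i) (euclNorm_nonneg x))) (hdbar i)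
    have b3 : |(1 + χp i) * (τ * Δ x i + d i) + εp i|
        ≤ (1 + χbar i) * (τ * (η i * euclNorm x) + dbar i) + εbar i := by
      calc |(1 + χp i) * (τ * Δ x i + d i) + εp i|
          ≤ |(1 + χp i) * (τ * Δ x i + d i)| + |εp i| := abs_add_le _ _
        _ ≤ (1 + χbar i) * (τ * (η i * euclNorm x) + dbar i) + εbar i := by
            rw [abs_mul]
            exact add_le_add (mul_le_mul b1 b2 (abs_nonneg _)
              (by linarith [(hχbar i).1])) (hεp i)
    have h5 : (1 + χbar i) * (τ * (η i * euclNorm x))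
        ≤ (1 + χbar i) * (τ * (η i * (M * (euclNorm y + euclNorm εbar)))) := by
      have hc : (0 : ℝ) ≤ (1 + χbar i) * τ * η i :=
        mul_nonneg (mul_nonneg (by linarith [(hχbar i).1]) hτ) (hη i)
      have := mul_le_mul_of_nonneg_left hnx hc
      nlinarith
    nlinarith [b3, h5]
  · -- the equation
    rw [hyp, hxp]
    have e1 : Aτ + Matrix.diagonal χp * Aτ = (1 + Matrix.diagonal χp) * Aτ := by
      rw [add_mul, one_mul]
    have e2 : Bτ + (Matrix.diagonal χp - ω • (1 + Matrix.diagonal χp)) * Bτ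
        = (1 - ω) • ((1 + Matrix.diagonal χp) * Bτ) := by
      simp only [Matrix.sub_mul, Matrix.add_mul, Matrix.one_mul, Matrix.smul_mul]
      module
    rw [e1, e2]
    simp only [← Matrix.mulVec_mulVec, Matrix.smul_mulVec, Matrix.mulVec_add,
      Matrix.mulVec_smul]
    abel
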